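/- For two row-strict composition tableaux Υ, Ω of the same shape α, Ω < Υ in the recursive total order if and only if x^Ω < x^Υ in lexicographic order on monomials, where x^Υ is the monomial with exponent vector equal to the inversion vector of Υ. -/

import Mathlib

open Finset

/-- The content interval `[n-m+1, n]` of a shifted tableau. -/
def content (n m : ℕ) : Finset ℕ := Finset.Icc (n - m + 1) n

lemma content_mono (n m : ℕ) : content n (m - 1) ⊆ content n m := by
  intro x hx
  simp only [content, Finset.mem_Icc] at *
  omega

/-- A (shifted) row-strict composition tableau of shape `β` (a weak composition of `m` with
`k` parts) and content `[n-m+1, n]`, encoded by the assignment of each entry to its row.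
(The filling of each row is determined by its set of entries, since entries strictly decrease
from left to right in each row.) -/
abbrev RSCT (n m k : ℕ) (β : Fin k → ℕ) : Type :=
  {row : {i : ℕ // i ∈ content n m} → Fin k //
    ∀ j : Fin k, (Finset.univ.filter fun i => row i = j).card = β j}

/-- The (0-indexed) column of entry `i`: the number of larger entries in its own row. -/
def colOf {n m k : ℕ} {β : Fin k → ℕ} (T : RSCT n m k β)
    (i : {a : ℕ // a ∈ content n m}) : ℕ :=
  (Finset.univ.filter fun i' : {a : ℕ // a ∈ content n m} =>
    T.val i' = T.val i ∧ (i : ℕ) < (i' : ℕ)).card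

/-- `(i, j)` is a Springer inversion of `T`: there is an entry `i' > i` in row `j` that is
either directly above `i` in the same column, or in a column strictly to the right of the
column of `i`. -/
def isInv {n m k : ℕ} {β : Fin k → ℕ} (T : RSCT n m k β) (i : ℕ) (j : Fin k) : Prop :=
  ∃ (hi : i ∈ content n m) (i' : {a : ℕ // a ∈ content n m}),
    T.val i' = j ∧ i < (i' : ℕ) ∧
      (colOf T ⟨i, hi⟩ < colOf T i' ∨
        (colOf T i' = colOf T ⟨i, hi⟩ ∧ j < T.val ⟨i, hi⟩))

/-- The finite set of Springer inversions of `T`. -/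
noncomputable def InvF {n m k : ℕ} {β : Fin k → ℕ} (T : RSCT n m k β) :
    Finset (ℕ × Fin k) :=
  @Finset.filter (ℕ × Fin k) (fun p => isInv T p.1 p.2) (Classical.decPred _)
    ((content n m) ×ˢ (Finset.univ : Finset (Fin k)))

/-- The inversion vector of `T`: `invVec T i` is the number of Springer inversions of `T`
with first coordinate `i`. -/
noncomputable def invVec {n m k : ℕ} {β : Fin k → ℕ} (T : RSCT n m k β) (i : ℕ) : ℕ :=
  ((InvF T).filter fun p => p.1 = i).card

/-- `etaRel T T'` expresses that `T'` is obtained from `T` by removing the box containing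
the minimal entry `n - m + 1` (which lies at the end of its row). -/
def etaRel {n m k : ℕ} {β β' : Fin k → ℕ} (T : RSCT n m k β)
    (T' : RSCT n (m - 1) k β') : Prop :=
  (∃ h : n - m + 1 ∈ content n m,
      β' = Function.update β (T.val ⟨n - m + 1, h⟩) (β (T.val ⟨n - m + 1, h⟩) - 1)) ∧
  ∀ (i : ℕ) (hi : i ∈ content n (m - 1)),
      T'.val ⟨i, hi⟩ = T.val ⟨i, content_mono n m hi⟩
/-- The specification of the recursive total order on row-strict composition tableaux:
if the minimal entries lie in different rows, compare via Springer inversions; if they lie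
in the same row, compare the tableaux obtained by removing the minimal entry; the relation
is empty on empty tableaux. -/
def OrderSpec (n k : ℕ)
    (R : ∀ (m : ℕ) (β : Fin k → ℕ), RSCT n m k β → RSCT n m k β → Prop) : Prop :=
  (∀ (β : Fin k → ℕ) (T T' : RSCT n 0 k β), ¬ R 0 β T T') ∧
  (∀ (m : ℕ) (β : Fin k → ℕ) (Υ Ω : RSCT n m k β) (h : n - m + 1 ∈ content n m),
      Υ.val ⟨n - m + 1, h⟩ ≠ Ω.val ⟨n - m + 1, h⟩ →
      (R m β Ω Υ ↔ isInv Υ (n - m + 1) (Ω.val ⟨n - m + 1, h⟩))) ∧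
  (∀ (m : ℕ) (β : Fin k → ℕ) (Υ Ω : RSCT n m k β) (h : n - m + 1 ∈ content n m),
      Υ.val ⟨n - m + 1, h⟩ = Ω.val ⟨n - m + 1, h⟩ →
      ∀ (β' : Fin k → ℕ) (Υ' Ω' : RSCT n (m - 1) k β'),
        etaRel Υ Υ' → etaRel Ω Ω' → (R m β Ω Υ ↔ R (m - 1) β' Ω' Υ'))

/-- The equivariant Springer monomial `P_Υ(z, x) = ∏_{(i,j) ∈ Inv(Υ)} (x_i − z_j)`,
with `x`-variables indexed by `Sum.inl` and `z`-variables by `Sum.inr`. -/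
noncomputable def Ppoly {n m k : ℕ} {β : Fin k → ℕ} (T : RSCT n m k β) :
    MvPolynomial (ℕ ⊕ Fin k) ℂ :=
  ∏ p ∈ InvF T, (MvPolynomial.X (Sum.inl p.1) - MvPolynomial.X (Sum.inr p.2))

/-- The localization map `φ_{w_Ω}`, substituting `x_i ↦ z_{r(i,Ω)}` where `r(i,Ω)` is the
row of `Ω` containing `i`, and fixing the `z`-variables. -/
noncomputable def loc {n m k : ℕ} {β : Fin k → ℕ} (Ω : RSCT n m k β) :
    MvPolynomial (ℕ ⊕ Fin k) ℂ →ₐ[ℂ] MvPolynomial (Fin k) ℂ :=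
  MvPolynomial.aeval fun v => match v with
    | Sum.inl i => if h : i ∈ content n m then MvPolynomial.X (Ω.val ⟨i, h⟩) else 0
    | Sum.inr j => MvPolynomial.X j

/-- Evaluation of all `z`-variables at `0`. -/
noncomputable def evz (k : ℕ) : MvPolynomial (ℕ ⊕ Fin k) ℂ →ₐ[ℂ] MvPolynomial ℕ ℂ :=
  MvPolynomial.aeval fun v => match v with
    | Sum.inl i => MvPolynomial.X i
    | Sum.inr _ => 0

/-- The Lehmer code of a permutation: `pcode w k = #{j > k : w j < w k}`. -/
def pcode {n : ℕ} (w : Equiv.Perm (Fin n)) (i : Fin n) : ℕ :=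
  (Finset.univ.filter fun j => i < j ∧ w j < w i).card

/-- The Coxeter length of a permutation: its number of inversions. -/
def plen {n : ℕ} (w : Equiv.Perm (Fin n)) : ℕ :=
  (Finset.univ.filter fun p : Fin n × Fin n => p.1 < p.2 ∧ w p.2 < w p.1).card


section Aux
variable {n m k : ℕ} {β : Fin k → ℕ}

lemma min_mem (hm : 1 ≤ m) (hmn : m ≤ n) : n - m + 1 ∈ content n m := by
  simp only [content, Finset.mem_Icc]; omega

lemma mem_lb {a : ℕ} (ha : a ∈ content n m) : n - m + 1 ≤ a := by
  simp only [content, Finset.mem_Icc] at ha; exact ha.1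

lemma isInv_mem {T : RSCT n m k β} {i : ℕ} {j : Fin k} (h : isInv T i j) :
    i ∈ content n m := h.choose

lemma invVec_eq_card (T : RSCT n m k β) (i : ℕ) :
    invVec T i =
      (@Finset.filter (Fin k) (fun j => isInv T i j) (Classical.decPred _)
        Finset.univ).card := by
  classical
  unfold invVec
  apply Finset.card_bij (fun p _ => p.2)
  · intro p hp
    simp only [InvF, Finset.mem_filter] at hp
    obtain ⟨⟨_, hinv⟩, h1⟩ := hp
    simp only [Finset.mem_filter, Finset.mem_univ, true_and]
    rwa [h1] at hinv
  · intro p hp q hq hpq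
    simp only [InvF, Finset.mem_filter] at hp hq
    exact Prod.ext (hp.2.trans hq.2.symm) hpq
  · intro j hj
    simp only [Finset.mem_filter, Finset.mem_univ, true_and] at hj
    refine ⟨(i, j), Finset.mem_filter.mpr ⟨Finset.mem_filter.mpr ⟨?_, hj⟩, rfl⟩, rfl⟩
    exact Finset.mem_product.mpr ⟨isInv_mem hj, Finset.mem_univ _⟩

lemma invVec_eq_zero (T : RSCT n m k β) {i : ℕ} (hi : i ∉ content n m) :
    invVec T i = 0 := by
  classical
  rw [invVec_eq_card, Finset.card_eq_zero, Finset.filter_eq_empty_iff]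
  intro j _ h
  exact hi (isInv_mem h)

lemma colOf_lt_of_lt (T : RSCT n m k β) {i₁ i₂ : {a : ℕ // a ∈ content n m}}
    (h : T.val i₁ = T.val i₂) (hlt : (i₁ : ℕ) < (i₂ : ℕ)) :
    colOf T i₂ < colOf T i₁ := by
  classical
  apply Finset.card_lt_card
  constructor
  · intro x hx
    simp only [Finset.mem_filter, Finset.mem_univ, true_and] at hx ⊢
    exact ⟨hx.1.trans h.symm, hlt.trans hx.2⟩
  · intro hsub
    have := hsub (Finset.mem_filter.mpr ⟨Finset.mem_univ _, h.symm, hlt⟩)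
    simp only [Finset.mem_filter, Finset.mem_univ, true_and] at this
    exact lt_irrefl _ this

lemma colOf_lt_row (T : RSCT n m k β) (i : {a : ℕ // a ∈ content n m}) :
    colOf T i < β (T.val i) := by
  classical
  rw [← T.2 (T.val i)]
  apply Finset.card_lt_card
  constructor
  · intro x hx
    simp only [Finset.mem_filter, Finset.mem_univ, true_and] at hx ⊢
    exact hx.1
  · intro hsub
    have := hsub (Finset.mem_filter.mpr ⟨Finset.mem_univ _, rfl⟩)
    simp only [Finset.mem_filter, Finset.mem_univ, true_and] at this
    exact lt_irrefl _ this

/-- In row `j` every column `c < β j` is achieved. -/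
lemma exists_colOf (T : RSCT n m k β) (j : Fin k) {c : ℕ} (hc : c < β j) :
    ∃ i : {a : ℕ // a ∈ content n m}, T.val i = j ∧ colOf T i = c := by
  classical
  set A := Finset.univ.filter fun i : {a : ℕ // a ∈ content n m} => T.val i = j with hA
  have hinj : Set.InjOn (colOf T) A := by
    intro x hx y hy hxy
    simp only [hA, Finset.coe_filter, Set.mem_setOf_eq] at hx hy
    by_contra hne
    have hne' : (x : ℕ) ≠ (y : ℕ) := fun h => hne (Subtype.ext h)
    rcases lt_or_gt_of_ne hne' with h | h
    · exact absurd hxy (ne_of_gt (colOf_lt_of_lt T (hx.2.trans hy.2.symm) h))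
    · exact absurd hxy (ne_of_lt (colOf_lt_of_lt T (hy.2.trans hx.2.symm) h))
  have hsub : A.image (colOf T) ⊆ Finset.range (β j) := by
    intro c hc
    simp only [Finset.mem_image] at hc
    obtain ⟨x, hx, rfl⟩ := hc
    simp only [hA, Finset.mem_filter] at hx
    rw [Finset.mem_range, ← hx.2]
    exact colOf_lt_row T x
  have hcard : (A.image (colOf T)).card = (Finset.range (β j)).card := by
    rw [Finset.card_image_of_injOn hinj, Finset.card_range, hA, T.2 j]
  have heq := Finset.eq_of_subset_of_card_le hsub (le_of_eq hcard.symm)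
  have : c ∈ A.image (colOf T) := by rw [heq]; exact Finset.mem_range.mpr hc
  simp only [Finset.mem_image, hA, Finset.mem_filter, Finset.mem_univ, true_and] at this
  obtain ⟨x, hx, hx2⟩ := this
  exact ⟨x, hx, hx2⟩

lemma lt_of_min {i' : {a : ℕ // a ∈ content n m}} (h : n - m + 1 ∈ content n m)
    (hne : i' ≠ (⟨n - m + 1, h⟩ : {a : ℕ // a ∈ content n m})) :
    n - m + 1 < (i' : ℕ) := by
  rcases Nat.lt_or_ge (n - m + 1) (i' : ℕ) with h1 | h1
  · exact h1
  · exact absurd (Subtype.ext (le_antisymm h1 (mem_lb i'.2))) hne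

lemma colOf_min (T : RSCT n m k β) (h : n - m + 1 ∈ content n m) :
    colOf T ⟨n - m + 1, h⟩ = β (T.val ⟨n - m + 1, h⟩) - 1 := by
  classical
  set r := T.val ⟨n - m + 1, h⟩ with hr
  have : (Finset.univ.filter fun i' : {a : ℕ // a ∈ content n m} =>
      T.val i' = r ∧ (n - m + 1 : ℕ) < (i' : ℕ)) =
      (Finset.univ.filter fun i' : {a : ℕ // a ∈ content n m} => T.val i' = r).erase
        ⟨n - m + 1, h⟩ := by
    ext x
    simp only [Finset.mem_filter, Finset.mem_univ, true_and, Finset.mem_erase]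
    constructor
    · rintro ⟨h1, h2⟩
      exact ⟨fun he => by simp [he] at h2, h1⟩
    · rintro ⟨h1, h2⟩
      exact ⟨h2, lt_of_min h h1⟩
  rw [colOf, this, Finset.card_erase_of_mem, T.2 r]
  exact Finset.mem_filter.mpr ⟨Finset.mem_univ _, rfl⟩

lemma beta_min_pos (T : RSCT n m k β) (h : n - m + 1 ∈ content n m) :
    1 ≤ β (T.val ⟨n - m + 1, h⟩) := by
  classical
  rw [← T.2]
  exact Finset.card_pos.mpr ⟨⟨n - m + 1, h⟩,
    Finset.mem_filter.mpr ⟨Finset.mem_univ _, rfl⟩⟩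

/-- Order on rows: `Prec β j r` means row `j` is longer, or equally long and above. -/
def Prec (β : Fin k → ℕ) (j r : Fin k) : Prop := β r < β j ∨ (β j = β r ∧ j < r)

lemma isInv_min_iff (T : RSCT n m k β) (h : n - m + 1 ∈ content n m) (j : Fin k) :
    isInv T (n - m + 1) j ↔ Prec β j (T.val ⟨n - m + 1, h⟩) := by
  classical
  set r := T.val ⟨n - m + 1, h⟩ with hr
  have hβr := beta_min_pos T h
  have hcol := colOf_min T h
  rw [← hr] at hβr hcol
  constructor
  · rintro ⟨hi, i', hrow, hlt, hcase⟩
    have hib : colOf T i' < β j := hrow ▸ colOf_lt_row T i'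
    have hii : (⟨n - m + 1, hi⟩ : {a : ℕ // a ∈ content n m}) = ⟨n - m + 1, h⟩ := rfl
    rw [hii, hcol] at hcase
    rcases hcase with h1 | ⟨h1, h2⟩
    · left; omega
    · rcases Nat.lt_or_ge (β r) (β j) with h3 | h3
      · left; exact h3
      · right
        rw [hii] at h2
        exact ⟨by omega, h2⟩
  · intro hp
    have hjr : j ≠ r := by
      rcases hp with h1 | ⟨h1, h2⟩
      · exact fun he => absurd h1 (by rw [he]; exact lt_irrefl _)
      · exact Fin.ne_of_lt h2
    rcases hp with h1 | ⟨h1, h2⟩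
    · obtain ⟨i', hi1, hi2⟩ := exists_colOf T j (show β r - 1 + 1 < β j by omega)
      refine ⟨h, i', hi1, ?_, Or.inl (by rw [hcol, hi2]; omega)⟩
      exact lt_of_min h (fun he => hjr (by rw [← hi1, he]))
    · obtain ⟨i', hi1, hi2⟩ := exists_colOf T j (show β r - 1 < β j by omega)
      refine ⟨h, i', hi1, ?_, Or.inr ⟨by rw [hcol, hi2], by rw [← hr]; exact h2⟩⟩
      exact lt_of_min h (fun he => hjr (by rw [← hi1, he]))

lemma Prec.irrefl (β : Fin k → ℕ) (j : Fin k) : ¬ Prec β j j := by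
  rintro (h | ⟨_, h⟩)
  · exact lt_irrefl _ h
  · exact lt_irrefl _ h

lemma Prec.trans {β : Fin k → ℕ} {a j r : Fin k} (h1 : Prec β a j) (h2 : Prec β j r) :
    Prec β a r := by
  rcases h1 with h1 | ⟨h1, h1'⟩ <;> rcases h2 with h2 | ⟨h2, h2'⟩
  · exact Or.inl (h2.trans h1)
  · exact Or.inl (h2 ▸ h1)
  · exact Or.inl (h1 ▸ h2)
  · exact Or.inr ⟨h1.trans h2, h1'.trans h2'⟩

lemma Prec.total {β : Fin k → ℕ} {j r : Fin k} (hne : j ≠ r) :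
    Prec β j r ∨ Prec β r j := by
  rcases Nat.lt_trichotomy (β j) (β r) with h | h | h
  · exact Or.inr (Or.inl h)
  · rcases lt_or_gt_of_ne (fun he : (j : ℕ) = r => hne (Fin.ext he)) with h' | h'
    · exact Or.inl (Or.inr ⟨h, h'⟩)
    · exact Or.inr (Or.inr ⟨h.symm, h'⟩)
  · exact Or.inl (Or.inl h)

/-- Rank of a row in the `Prec` order. -/
noncomputable def prank (β : Fin k → ℕ) (r : Fin k) : ℕ :=
  (@Finset.filter (Fin k) (fun j => Prec β j r) (Classical.decPred _) Finset.univ).card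

lemma prank_lt_of_prec {β : Fin k → ℕ} {j r : Fin k} (h : Prec β j r) :
    prank β j < prank β r := by
  classical
  unfold prank
  have hsub : insert j (Finset.univ.filter fun a => Prec β a j) ⊆
      Finset.univ.filter fun a => Prec β a r := by
    intro x hx
    rcases Finset.mem_insert.mp hx with rfl | hx
    · exact Finset.mem_filter.mpr ⟨Finset.mem_univ _, h⟩
    · exact Finset.mem_filter.mpr ⟨Finset.mem_univ _,
        Prec.trans (Finset.mem_filter.mp hx).2 h⟩
  have hcard := Finset.card_le_card hsub
  have hnotmem : j ∉ Finset.univ.filter fun a => Prec β a j :=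
    fun hc => Prec.irrefl β j (Finset.mem_filter.mp hc).2
  rw [Finset.card_insert_of_notMem hnotmem] at hcard
  omega

lemma prec_iff_prank {β : Fin k → ℕ} {j r : Fin k} :
    Prec β j r ↔ prank β j < prank β r := by
  constructor
  · exact prank_lt_of_prec
  · intro h
    by_contra hc
    rcases eq_or_ne j r with rfl | hne
    · exact lt_irrefl _ h
    · rcases Prec.total hne with h' | h'
      · exact hc h'
      · exact absurd h (not_lt_of_gt (prank_lt_of_prec h'))

lemma invVec_min (T : RSCT n m k β) (h : n - m + 1 ∈ content n m) :
    invVec T (n - m + 1) = prank β (T.val ⟨n - m + 1, h⟩) := by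
  classical
  rw [invVec_eq_card, prank]
  congr 1
  ext j
  simp only [Finset.mem_filter, Finset.mem_univ, true_and]
  exact isInv_min_iff T h j

lemma mem_content_pred (hm : 1 ≤ m) (hmn : m ≤ n) {a : ℕ} :
    a ∈ content n (m - 1) ↔ a ∈ content n m ∧ a ≠ n - m + 1 := by
  simp only [content, Finset.mem_Icc]
  omega

/-- Removing the box containing the minimal entry. -/
noncomputable def removeMin (hm : 1 ≤ m) (hmn : m ≤ n) (T : RSCT n m k β) :
    RSCT n (m - 1) k (Function.update β (T.val ⟨n - m + 1, min_mem hm hmn⟩)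
      (β (T.val ⟨n - m + 1, min_mem hm hmn⟩) - 1)) := by
  classical
  refine ⟨fun i => T.val ⟨i.1, content_mono n m i.2⟩, fun j => ?_⟩
  have key : (Finset.univ.filter fun i : {a : ℕ // a ∈ content n (m - 1)} =>
        T.val ⟨i.1, content_mono n m i.2⟩ = j).card =
      (Finset.univ.filter fun i : {a : ℕ // a ∈ content n m} =>
        T.val i = j ∧ (i : ℕ) ≠ n - m + 1).card := by
    apply Finset.card_bij (fun i _ => (⟨i.1, content_mono n m i.2⟩ :
      {a : ℕ // a ∈ content n m}))
    · intro i hi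
      simp only [Finset.mem_filter, Finset.mem_univ, true_and] at hi ⊢
      exact ⟨hi, ((mem_content_pred hm hmn).mp i.2).2⟩
    · intro i hi i' hi' hii
      injection hii with h
      exact Subtype.ext h
    · intro i hi
      simp only [Finset.mem_filter, Finset.mem_univ, true_and] at hi
      refine ⟨⟨i.1, (mem_content_pred hm hmn).mpr ⟨i.2, hi.2⟩⟩, ?_, rfl⟩
      simp only [Finset.mem_filter, Finset.mem_univ, true_and]
      exact hi.1
  rw [key]
  set r := T.val ⟨n - m + 1, min_mem hm hmn⟩ with hr
  by_cases hje : j = r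
  · have herase : (Finset.univ.filter fun i : {a : ℕ // a ∈ content n m} =>
        T.val i = j ∧ (i : ℕ) ≠ n - m + 1) =
        (Finset.univ.filter fun i : {a : ℕ // a ∈ content n m} => T.val i = j).erase
          ⟨n - m + 1, min_mem hm hmn⟩ := by
      ext x
      simp only [Finset.mem_filter, Finset.mem_univ, true_and, Finset.mem_erase]
      constructor
      · rintro ⟨h1, h2⟩
        exact ⟨fun he => h2 (congrArg Subtype.val he), h1⟩
      · rintro ⟨h1, h2⟩
        exact ⟨h2, fun he => h1 (Subtype.ext he)⟩
    rw [herase, Finset.card_erase_of_mem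
      (Finset.mem_filter.mpr ⟨Finset.mem_univ _, by rw [hje]⟩), T.2 j,
      hje, Function.update_self]
  · have heq : (Finset.univ.filter fun i : {a : ℕ // a ∈ content n m} =>
        T.val i = j ∧ (i : ℕ) ≠ n - m + 1) =
        Finset.univ.filter fun i : {a : ℕ // a ∈ content n m} => T.val i = j := by
      ext x
      simp only [Finset.mem_filter, Finset.mem_univ, true_and, and_iff_left_iff_imp]
      intro hx he
      have hxe : x = (⟨n - m + 1, min_mem hm hmn⟩ : {a : ℕ // a ∈ content n m}) :=
        Subtype.ext he
      exact hje (by rw [← hx, hxe])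
    rw [heq, T.2 j, Function.update_of_ne hje]

lemma removeMin_val (hm : 1 ≤ m) (hmn : m ≤ n) (T : RSCT n m k β)
    (i : {a : ℕ // a ∈ content n (m - 1)}) :
    (removeMin hm hmn T).val i = T.val ⟨i.1, content_mono n m i.2⟩ := rfl

lemma etaRel_removeMin (hm : 1 ≤ m) (hmn : m ≤ n) (T : RSCT n m k β) :
    etaRel T (removeMin hm hmn T) :=
  ⟨⟨min_mem hm hmn, rfl⟩, fun _ _ => rfl⟩

lemma colOf_removeMin (hm : 1 ≤ m) (hmn : m ≤ n) (T : RSCT n m k β)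
    (i : {a : ℕ // a ∈ content n (m - 1)}) :
    colOf (removeMin hm hmn T) i = colOf T ⟨i.1, content_mono n m i.2⟩ := by
  classical
  apply Finset.card_bij (fun i'' _ => (⟨i''.1, content_mono n m i''.2⟩ :
    {a : ℕ // a ∈ content n m}))
  · intro i'' hi''
    simp only [Finset.mem_filter, Finset.mem_univ, true_and, removeMin_val] at hi'' ⊢
    exact (Finset.mem_filter.mp hi'').2
  · intro a ha b hb hab
    injection hab with h
    exact Subtype.ext h
  · intro i'' hi''
    simp only [Finset.mem_filter, Finset.mem_univ, true_and] at hi''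
    have hmem : (i'' : ℕ) ∈ content n (m - 1) := by
      refine (mem_content_pred hm hmn).mpr ⟨i''.2, ?_⟩
      have := mem_lb i.2
      have h2 := hi''.2
      omega
    refine ⟨⟨i''.1, hmem⟩, ?_, rfl⟩
    simp only [Finset.mem_filter, Finset.mem_univ, true_and, removeMin_val]
    exact Finset.mem_filter.mpr ⟨Finset.mem_univ _, hi''⟩

lemma isInv_removeMin (hm : 1 ≤ m) (hmn : m ≤ n) (T : RSCT n m k β)
    {i : ℕ} (hi : i ≠ n - m + 1) (j : Fin k) :
    isInv (removeMin hm hmn T) i j ↔ isInv T i j := by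
  constructor
  · rintro ⟨hi', i', hrow, hlt, hcase⟩
    refine ⟨content_mono n m hi', ⟨i'.1, content_mono n m i'.2⟩, hrow, hlt, ?_⟩
    rw [colOf_removeMin hm hmn T ⟨i, hi'⟩, colOf_removeMin hm hmn T i'] at hcase
    exact hcase
  · rintro ⟨hi', i', hrow, hlt, hcase⟩
    have hii : i ∈ content n (m - 1) := (mem_content_pred hm hmn).mpr ⟨hi', hi⟩
    have hlb : n - m + 1 ≤ i := mem_lb hi'
    have hi'mem : (i' : ℕ) ∈ content n (m - 1) := by
      refine (mem_content_pred hm hmn).mpr ⟨i'.2, ?_⟩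
      omega
    refine ⟨hii, ⟨i'.1, hi'mem⟩, ?_, hlt, ?_⟩
    · rw [removeMin_val]
      convert hrow
    · rw [colOf_removeMin hm hmn T ⟨i, hii⟩, colOf_removeMin hm hmn T ⟨i'.1, hi'mem⟩]
      convert hcase
      exact removeMin_val hm hmn T ⟨i, hii⟩

lemma invVec_removeMin (hm : 1 ≤ m) (hmn : m ≤ n) (T : RSCT n m k β)
    {s : ℕ} (hs : s ≠ n - m + 1) :
    invVec (removeMin hm hmn T) s = invVec T s := by
  classical
  rw [invVec_eq_card, invVec_eq_card]
  congr 1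
  ext j
  simp only [Finset.mem_filter, Finset.mem_univ, true_and]
  exact isInv_removeMin hm hmn T hs j

lemma invVec_congr {γ : Fin k → ℕ} {T : RSCT n m k β} {U : RSCT n m k γ}
    (h : T.val = U.val) : invVec T = invVec U := by
  unfold invVec InvF isInv colOf
  rw [h]

lemma lex_shift {a b a' b' : ℕ → ℕ} (t0 : ℕ)
    (h : ∀ s, s ≠ t0 → a s = a' s ∧ b s = b' s)
    (h1 : a t0 = b t0) (h2 : a' t0 = b' t0) :
    (∃ t, a t < b t ∧ ∀ s, s < t → a s = b s) →
      ∃ t, a' t < b' t ∧ ∀ s, s < t → a' s = b' s := by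
  rintro ⟨t, hlt, hs⟩
  have ht0 : t ≠ t0 := fun he => by rw [he, h1] at hlt; exact lt_irrefl _ hlt
  refine ⟨t, ?_, ?_⟩
  · rw [← (h t ht0).1, ← (h t ht0).2]; exact hlt
  · intro s hst
    rcases eq_or_ne s t0 with rfl | hs0
    · exact h2
    · rw [← (h s hs0).1, ← (h s hs0).2]; exact hs s hst

lemma lex_congr {a b a' b' : ℕ → ℕ} (t0 : ℕ)
    (h : ∀ s, s ≠ t0 → a s = a' s ∧ b s = b' s)
    (h1 : a t0 = b t0) (h2 : a' t0 = b' t0) :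
    (∃ t, a t < b t ∧ ∀ s, s < t → a s = b s) ↔
      ∃ t, a' t < b' t ∧ ∀ s, s < t → a' s = b' s :=
  ⟨lex_shift t0 h h1 h2,
    lex_shift t0 (fun s hs => ⟨(h s hs).1.symm, (h s hs).2.symm⟩) h2 h1⟩

theorem aux_main (n k : ℕ)
    (R : ∀ (m : ℕ) (β : Fin k → ℕ), RSCT n m k β → RSCT n m k β → Prop)
    (hR : OrderSpec n k R) :
    ∀ (m : ℕ), m ≤ n → ∀ (β : Fin k → ℕ) (Υ Ω : RSCT n m k β),
      R m β Ω Υ ↔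
        ∃ t : ℕ, invVec Ω t < invVec Υ t ∧ ∀ s : ℕ, s < t → invVec Ω s = invVec Υ s := by
  intro m
  induction m with
  | zero =>
    intro _ β Υ Ω
    refine iff_of_false (hR.1 β Ω Υ) ?_
    rintro ⟨t, hlt, -⟩
    have hni : t ∉ content n 0 := by simp only [content, Finset.mem_Icc]; omega
    rw [invVec_eq_zero Υ hni, invVec_eq_zero Ω hni] at hlt
    exact lt_irrefl _ hlt
  | succ m ih =>
    intro hmn β Υ Ω
    have hm : 1 ≤ m + 1 := Nat.succ_le_succ (Nat.zero_le m)
    have h : n - (m + 1) + 1 ∈ content n (m + 1) := min_mem hm hmn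
    by_cases heq : Υ.val ⟨n - (m + 1) + 1, h⟩ = Ω.val ⟨n - (m + 1) + 1, h⟩
    · -- minimal entries in the same row
      have hΩd : Function.update β (Ω.val ⟨n - (m + 1) + 1, min_mem hm hmn⟩)
            (β (Ω.val ⟨n - (m + 1) + 1, min_mem hm hmn⟩) - 1) =
          Function.update β (Υ.val ⟨n - (m + 1) + 1, h⟩)
            (β (Υ.val ⟨n - (m + 1) + 1, h⟩) - 1) := by rw [heq]
      refine (hR.2.2 (m + 1) β Υ Ω h heq _ (removeMin hm hmn Υ)
        ⟨(removeMin hm hmn Ω).val, fun j => congrFun hΩd j ▸ (removeMin hm hmn Ω).2 j⟩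
        (etaRel_removeMin hm hmn Υ) ⟨⟨h, hΩd.symm⟩, fun i hi => rfl⟩).trans ?_
      refine (ih (by omega) _ (removeMin hm hmn Υ)
        ⟨(removeMin hm hmn Ω).val, fun j => congrFun hΩd j ▸ (removeMin hm hmn Ω).2 j⟩).trans ?_
      have hnotmem : n - (m + 1) + 1 ∉ content n (m + 1 - 1) := by
        simp only [content, Finset.mem_Icc]; omega
      apply lex_congr (n - (m + 1) + 1)
      · intro s hs
        constructor
        · exact (congrFun (invVec_congr (U := removeMin hm hmn Ω) rfl) s).trans
            (invVec_removeMin hm hmn Ω hs)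
        · exact invVec_removeMin hm hmn Υ hs
      · rw [invVec_eq_zero _ hnotmem, invVec_eq_zero _ hnotmem]
      · rw [invVec_min Ω h, invVec_min Υ h, heq]
    · -- minimal entries in different rows
      rw [hR.2.1 (m + 1) β Υ Ω h heq]
      have hmain : isInv Υ (n - (m + 1) + 1) (Ω.val ⟨n - (m + 1) + 1, h⟩) ↔
          invVec Ω (n - (m + 1) + 1) < invVec Υ (n - (m + 1) + 1) := by
        rw [isInv_min_iff Υ h, invVec_min Ω h, invVec_min Υ h, prec_iff_prank]
      have hne' : invVec Ω (n - (m + 1) + 1) ≠ invVec Υ (n - (m + 1) + 1) := by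
        rw [invVec_min Ω h, invVec_min Υ h]
        rcases Prec.total (β := β) (fun he => heq he.symm) with hp | hp
        · exact ne_of_lt (prank_lt_of_prec hp)
        · exact ne_of_gt (prank_lt_of_prec hp)
      have hzero : ∀ s, s < n - (m + 1) + 1 → s ∉ content n (m + 1) := by
        intro s hs
        simp only [content, Finset.mem_Icc]
        omega
      constructor
      · intro hinv
        refine ⟨n - (m + 1) + 1, hmain.mp hinv, fun s hs => ?_⟩
        rw [invVec_eq_zero Ω (hzero s hs), invVec_eq_zero Υ (hzero s hs)]
      · rintro ⟨t, hlt, hall⟩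
        rcases lt_trichotomy t (n - (m + 1) + 1) with ht | rfl | ht
        · rw [invVec_eq_zero Ω (hzero t ht), invVec_eq_zero Υ (hzero t ht)] at hlt
          exact absurd hlt (lt_irrefl _)
        · exact hmain.mpr hlt
        · exact absurd (hall _ ht) hne'

/-- For two row-strict composition tableaux `Υ, Ω` of the same strong
composition shape `α`, `Ω < Υ` in the recursive total order if and only if `x^Ω < x^Υ` in
lexicographic order on monomials, where `x^Υ` has exponent vector the inversion vector of
`Υ` (lex: smaller exponent at the first index where the exponent vectors differ). -/
theorem stmt16 (n k : ℕ)
    (R : ∀ (m : ℕ) (β : Fin k → ℕ), RSCT n m k β → RSCT n m k β → Prop)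
    (hR : OrderSpec n k R) (m : ℕ) (hmn : m ≤ n)
    (α : Fin k → ℕ) (hpos : ∀ j, 0 < α j) (hsum : ∑ j, α j = m)
    (Υ Ω : RSCT n m k α) :
    R m α Ω Υ ↔
      ∃ t : ℕ, invVec Ω t < invVec Υ t ∧ ∀ s : ℕ, s < t → invVec Ω s = invVec Υ s := by
  exact aux_main n k R hR m hmn α Υ Ω
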